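/- arXiv:2509.18203 — 2 statements merged into one kernel-verified Lean document; each statement's English description precedes it below -/
import Mathlib

section
/- In the d-dimensional lattice graph, fix t with d−1 ≤ t ≤ dn−1 and p ∈ L_{t+1}, and let M_p = (L_t ∪ K_t) ∩ N(p). If w ∈ ℝ^{M_p} is orthogonal to all restrictions {u|_{M_p} : u ∈ 𝒰^{(t)}}, then w is a scalar multiple of (γ_{pq})_{q ∈ M_p}, i.e., of the restriction of the Laplacian row v_p to M_p. -/
noncomputable section
open Classical Finset

namespace DiscreteCalderon

/-- Vertices of the ambient lattice `ℤ^d`. -/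
abbrev V (d : ℕ) := Fin d → ℤ

/-- Interior vertex set `D = {x : 1 ≤ x_i ≤ n}`. -/
def Dset (d n : ℕ) : Set (V d) := {x | ∀ i, 1 ≤ x i ∧ x i ≤ (n : ℤ)}

/-- ℓ¹ distance. -/
def dist1 {d : ℕ} (p q : V d) : ℤ := ∑ i, |p i - q i|

/-- Boundary vertex set `∂D`: vertices at ℓ¹ distance 1 from `D`. -/
def Bset (d n : ℕ) : Set (V d) := {p | p ∉ Dset d n ∧ ∃ q ∈ Dset d n, dist1 p q = 1}

/-- All vertices of the graph, `D ∪ ∂D`. -/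
def Vset (d n : ℕ) : Set (V d) := Dset d n ∪ Bset d n

/-- Adjacency of the lattice graph: ℓ¹ distance 1, both endpoints vertices,
not both on the boundary. -/
def Adj (d n : ℕ) (p q : V d) : Prop :=
  dist1 p q = 1 ∧ p ∈ Vset d n ∧ q ∈ Vset d n ∧ (p ∈ Dset d n ∨ q ∈ Dset d n)

/-- A finite box containing all vertices. -/
def box (d n : ℕ) : Finset (V d) :=
  Fintype.piFinset (fun _ : Fin d => Finset.Icc (0 : ℤ) ((n : ℤ) + 1))

/-- Neighbours of `p` in the graph, as a finite set. -/
def nbr (d n : ℕ) (p : V d) : Finset (V d) := (box d n).filter (fun q => Adj d n p q)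

/-- Interior neighbours of `p`. -/
def nbrD (d n : ℕ) (p : V d) : Finset (V d) := (nbr d n p).filter (fun q => q ∈ Dset d n)

/-- The discrete (weighted) Laplacian `(Δ_γ u)_p = ∑_{q∈N(p)} γ_{qp}(u_q - u_p)`. -/
def lap (d n : ℕ) (γ : V d → V d → ℝ) (u : V d → ℝ) (p : V d) : ℝ :=
  ∑ q ∈ nbr d n p, γ q p * (u q - u p)

/-- The boundary current `(D_γ u)_p = ∑_{q∈N(p)∩D} γ_{pq}(u_q - u_p)`
(there is exactly one interior neighbour of a boundary node). -/
def cur (d n : ℕ) (γ : V d → V d → ℝ) (u : V d → ℝ) (p : V d) : ℝ :=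
  ∑ q ∈ nbrD d n p, γ p q * (u q - u p)

/-- A strictly positive symmetric conductivity. -/
def GoodCond (d n : ℕ) (γ : V d → V d → ℝ) : Prop :=
  (∀ p q, γ p q = γ q p) ∧ ∀ p q, Adj d n p q → 0 < γ p q

/-- The coordinate sum of a lattice point. -/
def sum1 {d : ℕ} (x : V d) : ℤ := ∑ i, x i

/-- Interior diagonal slice `L_t`. -/
def L (d n : ℕ) (t : ℤ) : Set (V d) := {x | x ∈ Dset d n ∧ sum1 x = t}

/-- `L_t^S = ∪_{ℓ ≤ t} L_ℓ`. -/
def LS (d n : ℕ) (t : ℤ) : Set (V d) := {x | x ∈ Dset d n ∧ sum1 x ≤ t}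

/-- Boundary diagonal slice `K_t`. -/
def K (d n : ℕ) (t : ℤ) : Set (V d) := {x | x ∈ Bset d n ∧ sum1 x = t}

/-- `K_t^- = {x ∈ K_t : min_i x_i = 0}`. -/
def Km (d n : ℕ) (t : ℤ) : Set (V d) := {x | x ∈ K d n t ∧ ∃ i, x i = 0}

/-- `K_t^+ = {x ∈ K_t : max_i x_i = n+1}`. -/
def Kp (d n : ℕ) (t : ℤ) : Set (V d) := {x | x ∈ K d n t ∧ ∃ i, x i = (n : ℤ) + 1}

/-- `K_t^{S-} = ∪_{ℓ ≤ t} K_ℓ^-`. -/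
def KSm (d n : ℕ) (t : ℤ) : Set (V d) := {x | x ∈ Bset d n ∧ sum1 x ≤ t ∧ ∃ i, x i = 0}

/-- `K_t^{S+} = ∪_{ℓ ≤ t} K_ℓ^+`. -/
def KSp (d n : ℕ) (t : ℤ) : Set (V d) := {x | x ∈ Bset d n ∧ sum1 x ≤ t ∧ ∃ i, x i = (n : ℤ) + 1}

/-- The lower boundary region `J_t^S = K_t^{S-} ∪ K_{t+1}^{S+}`. -/
def JS (d n : ℕ) (t : ℤ) : Set (V d) := KSm d n t ∪ KSp d n (t + 1)

/-- `J_t = K_t^- ∪ K_{t+1}^+`. -/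
def Jslice (d n : ℕ) (t : ℤ) : Set (V d) := Km d n t ∪ Kp d n (t + 1)

/-- `u` is the γ-harmonic extension of boundary data `φ` (zero-extension convention
outside `D ∪ ∂D`). -/
def IsSol (d n : ℕ) (γ : V d → V d → ℝ) (φ u : V d → ℝ) : Prop :=
  (∀ p, p ∉ Vset d n → u p = 0) ∧
  (∀ p ∈ Dset d n, lap d n γ u p = 0) ∧
  (∀ p ∈ Bset d n, u p = φ p)

/-- The Laplacian row vector `v_p`. -/
def vrow (d n : ℕ) (γ : V d → V d → ℝ) (p : V d) : V d → ℝ := fun q =>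
  if Adj d n p q then γ p q
  else if q = p then -(∑ r ∈ nbr d n p, γ p r) else 0

/-- Restriction of a function to a set (zero outside). -/
def rst {d : ℕ} (S : Set (V d)) (f : V d → ℝ) : V d → ℝ := fun q => if q ∈ S then f q else 0

/-- Euclidean inner product of (vertex-supported) functions. -/
def dot (d n : ℕ) (f g : V d → ℝ) : ℝ := ∑ p ∈ box d n, f p * g p

/-- The localized solution space `𝒰^{(t)}`: restrictions to `L_t^S ∪ J_t^S` of
harmonic extensions of boundary potentials in `ker T₁^{(t)}`. -/
def Uset (d n : ℕ) (γ : V d → V d → ℝ) (t : ℤ) : Set (V d → ℝ) :=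
  {u | (∀ p, p ∉ LS d n t ∪ JS d n t → u p = 0) ∧
    ∃ φ w : V d → ℝ, (∀ p, p ∉ JS d n t → φ p = 0) ∧ IsSol d n γ φ w ∧
      (∀ p ∈ L d n (t + 1), w p = 0) ∧ ∀ p ∈ LS d n t ∪ JS d n t, u p = w p}

/-- The set `E_t` of edges between the consecutive layers:
`E(K_t^-, L_{t+1}) ∪ E(L_t, K_{t+1}^+) ∪ E(L_t, L_{t+1})`. -/
def EdgeT (d n : ℕ) (t : ℤ) (p q : V d) : Prop :=
  Adj d n p q ∧
    ((p ∈ Km d n t ∧ q ∈ L d n (t + 1)) ∨ (q ∈ Km d n t ∧ p ∈ L d n (t + 1)) ∨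
     (p ∈ L d n t ∧ q ∈ Kp d n (t + 1)) ∨ (q ∈ L d n t ∧ p ∈ Kp d n (t + 1)) ∨
     (p ∈ L d n t ∧ q ∈ L d n (t + 1)) ∨ (q ∈ L d n t ∧ p ∈ L d n (t + 1)))

/-- The edge vector `J_p^u ∈ ℝ^{E_t}`, `J_p^u(pq) = u_p - u_q` on edges of `E_t`
incident to `p`, and `0` otherwise (as a symmetric function of edge endpoints). -/
def Jvec (d n : ℕ) (t : ℤ) (u : V d → ℝ) (p : V d) : V d → V d → ℝ := fun a b =>
  if EdgeT d n t a b then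
    (if a = p then u a - u b else if b = p then u b - u a else 0)
  else 0

/-- Inner product of edge functions. -/
def dotE (d n : ℕ) (f g : V d → V d → ℝ) : ℝ :=
  ∑ p ∈ box d n, ∑ q ∈ box d n, f p q * g p q

/-! ### Auxiliary lattice lemmas -/

def unitv (d : ℕ) (i : Fin d) : V d := fun j => if j = i then 1 else 0

lemma unitv_apply_self {d : ℕ} (i : Fin d) : unitv d i i = 1 := if_pos rfl

lemma unitv_apply_ne {d : ℕ} {i j : Fin d} (h : j ≠ i) : unitv d i j = 0 := if_neg h

lemma sum1_add_unit {d : ℕ} (x : V d) (i : Fin d) : sum1 (x + unitv d i) = sum1 x + 1 := by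
  unfold sum1
  have : ∀ j, (x + unitv d i) j = x j + unitv d i j := fun j => rfl
  simp only [this]
  rw [Finset.sum_add_distrib]
  congr 1
  unfold unitv
  simp

lemma sum1_sub_unit {d : ℕ} (x : V d) (i : Fin d) : sum1 (x - unitv d i) = sum1 x - 1 := by
  unfold sum1
  have : ∀ j, (x - unitv d i) j = x j - unitv d i j := fun j => rfl
  simp only [this]
  rw [Finset.sum_sub_distrib]
  congr 1
  unfold unitv
  simp

lemma dist1_comm {d : ℕ} (p q : V d) : dist1 p q = dist1 q p := by
  unfold dist1; congr 1; funext i; rw [abs_sub_comm]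

lemma dist1_add_unit {d : ℕ} (p : V d) (i : Fin d) : dist1 p (p + unitv d i) = 1 := by
  unfold dist1
  rw [Finset.sum_eq_single i]
  · simp [unitv]
  · intro j _ hj
    have : (p + unitv d i) j = p j := by simp [unitv, hj]
    simp [this]
  · simp

lemma dist1_sub_unit {d : ℕ} (p : V d) (i : Fin d) : dist1 p (p - unitv d i) = 1 := by
  unfold dist1
  rw [Finset.sum_eq_single i]
  · simp [unitv]
  · intro j _ hj
    have : (p - unitv d i) j = p j := by simp [unitv, hj]
    simp [this]
  · simp

lemma eq_add_or_sub_of_dist1 {d : ℕ} {p q : V d} (h : dist1 p q = 1) :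
    ∃ i, q = p + unitv d i ∨ q = p - unitv d i := by
  classical
  unfold dist1 at h
  -- there is an index with nonzero difference
  have hex : ∃ i, p i ≠ q i := by
    by_contra hc
    push_neg at hc
    have : ∀ i, |p i - q i| = 0 := by intro i; simp [hc i]
    simp [this] at h
  obtain ⟨i, hi⟩ := hex
  have h1 : 1 ≤ |p i - q i| := Int.one_le_abs (sub_ne_zero.mpr hi)
  have hsplit : |p i - q i| + ∑ j ∈ Finset.univ.erase i, |p j - q j| = 1 := by
    rw [Finset.add_sum_erase Finset.univ (fun j => |p j - q j|) (Finset.mem_univ i)]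
    exact h
  have hnn : (0:ℤ) ≤ ∑ j ∈ Finset.univ.erase i, |p j - q j| :=
    Finset.sum_nonneg (fun k _ => abs_nonneg _)
  have hrest : ∑ j ∈ Finset.univ.erase i, |p j - q j| = 0 := by omega
  have hzero : ∀ j, j ≠ i → p j = q j := by
    intro j hj
    have h0 := (Finset.sum_eq_zero_iff_of_nonneg
      (fun k _ => abs_nonneg (p k - q k))).mp hrest j (Finset.mem_erase.mpr ⟨hj, Finset.mem_univ j⟩)
    have := abs_eq_zero.mp h0
    omega
  have habs : |p i - q i| = 1 := by omega
  rcases (abs_eq (by norm_num : (0:ℤ) ≤ 1)).mp habs with hcase | hcase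
  · refine ⟨i, Or.inr ?_⟩
    funext j
    by_cases hji : j = i
    · subst hji; simp only [Pi.sub_apply, unitv_apply_self]; omega
    · simp only [Pi.sub_apply, unitv_apply_ne hji, sub_zero]; exact (hzero j hji).symm
  · refine ⟨i, Or.inl ?_⟩
    funext j
    by_cases hji : j = i
    · subst hji; simp only [Pi.add_apply, unitv_apply_self]; omega
    · simp only [Pi.add_apply, unitv_apply_ne hji, add_zero]; exact (hzero j hji).symm
lemma mem_box_of_coords {d n : ℕ} {x : V d} (h : ∀ i, 0 ≤ x i ∧ x i ≤ (n:ℤ)+1) :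
    x ∈ box d n := by
  unfold box
  rw [Fintype.mem_piFinset]
  intro i
  rw [Finset.mem_Icc]
  exact h i

lemma Vset_subset_box {d n : ℕ} {p : V d} (h : p ∈ Vset d n) : p ∈ box d n := by
  rcases h with h | h
  · exact mem_box_of_coords (fun i => ⟨by linarith [(h i).1], by linarith [(h i).2]⟩)
  · obtain ⟨-, q, hq, hdist⟩ := h
    rw [dist1_comm] at hdist
    obtain ⟨i, hi | hi⟩ := eq_add_or_sub_of_dist1 hdist
    all_goals
      subst hi
      refine mem_box_of_coords (fun j => ?_)
      by_cases hji : j = i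
      · subst hji
        simp only [Pi.add_apply, Pi.sub_apply, unitv_apply_self]
        constructor <;> linarith [(hq j).1, (hq j).2]
      · simp only [Pi.add_apply, Pi.sub_apply, unitv_apply_ne hji, add_zero, sub_zero]
        constructor <;> linarith [(hq j).1, (hq j).2]

lemma adj_symm {d n : ℕ} {p q : V d} (h : Adj d n p q) : Adj d n q p := by
  obtain ⟨h1, h2, h3, h4⟩ := h
  exact ⟨by rw [dist1_comm]; exact h1, h3, h2, h4.symm⟩

lemma adj_sum1 {d n : ℕ} {p q : V d} (h : Adj d n p q) :
    sum1 q = sum1 p + 1 ∨ sum1 q = sum1 p - 1 := by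
  obtain ⟨i, hi | hi⟩ := eq_add_or_sub_of_dist1 h.1
  · left; rw [hi, sum1_add_unit]
  · right; rw [hi, sum1_sub_unit]

lemma mem_nbr_iff {d n : ℕ} {p q : V d} : q ∈ nbr d n p ↔ Adj d n p q := by
  unfold nbr
  rw [Finset.mem_filter]
  constructor
  · exact fun h => h.2
  · exact fun h => ⟨Vset_subset_box h.2.2.1, h⟩

lemma bset_coords {d n : ℕ} {b : V d} (hb : b ∈ Bset d n) :
    ∃ k, (b k = 0 ∨ b k = (n:ℤ)+1) ∧ ∀ j, j ≠ k → 1 ≤ b j ∧ b j ≤ (n:ℤ) := by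
  obtain ⟨hnd, q, hq, hdist⟩ := hb
  rw [dist1_comm] at hdist
  obtain ⟨k, hk | hk⟩ := eq_add_or_sub_of_dist1 hdist
  all_goals
    refine ⟨k, ?_, ?_⟩
    · have hbk : b k = q k + 1 ∨ b k = q k - 1 := by
        rw [hk]
        simp only [Pi.add_apply, Pi.sub_apply, unitv_apply_self]
        tauto
      have hout : ¬ (1 ≤ b k ∧ b k ≤ (n:ℤ)) := by
        intro hcon
        apply hnd
        intro j
        by_cases hji : j = k
        · subst hji; exact hcon
        · rw [hk]
          simp only [Pi.add_apply, Pi.sub_apply, unitv_apply_ne hji, add_zero, sub_zero]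
          exact hq j
      have := (hq k).1
      have := (hq k).2
      omega
    · intro j hj
      rw [hk]
      simp only [Pi.add_apply, Pi.sub_apply, unitv_apply_ne hj, add_zero, sub_zero]
      exact hq j

lemma bset_unique_nbr {d n : ℕ} {b r : V d} {k : Fin d} (hbk : b k = 0)
    (hr : r ∈ Dset d n) (hdist : dist1 b r = 1) : r = b + unitv d k := by
  obtain ⟨j, hj | hj⟩ := eq_add_or_sub_of_dist1 hdist
  · by_cases hjk : j = k
    · subst hjk; exact hj
    · exfalso
      have : r k = b k := by rw [hj]; simp [unitv_apply_ne (Ne.symm hjk)]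
      have := (hr k).1
      omega
  · exfalso
    have h1 := (hr j).1
    by_cases hjk : j = k
    · subst hjk
      have : r j = b j - 1 := by rw [hj]; simp [unitv_apply_self]
      omega
    · have : r k = b k := by rw [hj]; simp [unitv_apply_ne (Ne.symm hjk)]
      have := (hr k).1
      omega
section MGeom

variable {d n : ℕ} {t : ℤ} {p₀ : V d}

lemma sub_unit_facts (hp₀ : p₀ ∈ L d n (t+1)) (i : Fin d) :
    (p₀ - unitv d i) ∈ Vset d n ∧ Adj d n p₀ (p₀ - unitv d i) ∧
      (p₀ - unitv d i) ∈ L d n t ∪ K d n t := by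
  obtain ⟨hD, hsum⟩ := hp₀
  have hcoord : ∀ j, j ≠ i → (p₀ - unitv d i) j = p₀ j := by
    intro j hj; simp [unitv_apply_ne hj]
  have hcoordi : (p₀ - unitv d i) i = p₀ i - 1 := by simp [unitv_apply_self]
  have hsum' : sum1 (p₀ - unitv d i) = t := by rw [sum1_sub_unit]; omega
  have hV : (p₀ - unitv d i) ∈ Vset d n := by
    by_cases h2 : 2 ≤ p₀ i
    · left
      intro j
      by_cases hj : j = i
      · subst hj; rw [hcoordi]; have := (hD j).2; omega
      · rw [hcoord j hj]; exact hD j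
    · right
      have h1 : p₀ i = 1 := by have := (hD i).1; omega
      constructor
      · intro hc
        have := (hc i).1
        rw [hcoordi, h1] at this
        omega
      · exact ⟨p₀, hD, by rw [dist1_comm]; exact dist1_sub_unit p₀ i⟩
  have hAdj : Adj d n p₀ (p₀ - unitv d i) :=
    ⟨dist1_sub_unit p₀ i, Or.inl hD, hV, Or.inl hD⟩
  refine ⟨hV, hAdj, ?_⟩
  rcases hV with hDq | hBq
  · left; exact ⟨hDq, hsum'⟩
  · right; exact ⟨hBq, hsum'⟩

lemma mem_M_iff (hp₀ : p₀ ∈ L d n (t+1)) {q : V d} :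
    q ∈ (L d n t ∪ K d n t) ∩ {q | Adj d n p₀ q} ↔ ∃ i, q = p₀ - unitv d i := by
  constructor
  · rintro ⟨hq1, hq2⟩
    have hsq : sum1 q = t := by
      rcases hq1 with h | h
      · exact h.2
      · exact h.2
    obtain ⟨i, hi | hi⟩ := eq_add_or_sub_of_dist1 (hq2 : Adj d n p₀ q).1
    · exfalso
      have := sum1_add_unit p₀ i
      rw [← hi] at this
      have := hp₀.2
      omega
    · exact ⟨i, hi⟩
  · rintro ⟨i, rfl⟩
    obtain ⟨hV, hAdj, hLK⟩ := sub_unit_facts hp₀ i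
    exact ⟨hLK, hAdj⟩

end MGeom
section LinAlgAux

lemma dual_factor {V₁ W : Type*} [AddCommGroup V₁] [Module ℝ V₁] [AddCommGroup W] [Module ℝ W]
    (S : V₁ →ₗ[ℝ] W) (F : V₁ →ₗ[ℝ] ℝ) (h : ∀ v, S v = 0 → F v = 0) :
    ∃ G : W →ₗ[ℝ] ℝ, ∀ v, F v = G (S v) := by
  have hker : LinearMap.ker S ≤ LinearMap.ker F := fun v hv => h v hv
  let F₁ : (V₁ ⧸ LinearMap.ker S) →ₗ[ℝ] ℝ := Submodule.liftQ _ F hker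
  let e := S.quotKerEquivRange
  let F₂ : LinearMap.range S →ₗ[ℝ] ℝ := F₁.comp (e.symm : LinearMap.range S →ₗ[ℝ] _)
  obtain ⟨G, hG⟩ := F₂.exists_extend
  refine ⟨G, fun v => ?_⟩
  have h1 : G (S v) = F₂ ⟨S v, LinearMap.mem_range_self S v⟩ := by
    have := congrArg (fun (φ : LinearMap.range S →ₗ[ℝ] ℝ) =>
      φ ⟨S v, LinearMap.mem_range_self S v⟩) hG
    simpa using this
  have h2 : e.symm ⟨S v, LinearMap.mem_range_self S v⟩ =
      Submodule.Quotient.mk v := S.quotKerEquivRange_symm_apply_image v (LinearMap.mem_range_self S v)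
  rw [h1]
  show F v = F₁ (e.symm ⟨S v, LinearMap.mem_range_self S v⟩)
  rw [h2]
  rfl

end LinAlgAux
section Setup

variable {d n : ℕ}

lemma apply_eq_sum {d : ℕ} (G : (V d → ℝ) →ₗ[ℝ] ℝ) (s : Finset (V d)) (g : V d → ℝ)
    (hg : ∀ p, p ∉ s → g p = 0) :
    G g = ∑ r ∈ s, g r * G (fun p => if p = r then 1 else 0) := by
  have hdecomp : g = ∑ r ∈ s, g r • (fun p => if p = r then (1:ℝ) else 0) := by
    funext p
    rw [Finset.sum_apply]
    by_cases hp : p ∈ s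
    · rw [Finset.sum_eq_single p]
      · simp
      · intro b _ hb
        have : p ≠ b := fun hc => hb hc.symm
        simp [this]
      · intro hc; exact absurd hp hc
    · rw [Finset.sum_eq_zero]
      · exact hg p hp
      · intro b hb
        have : p ≠ b := fun hc => hp (hc ▸ hb)
        simp [this]
  conv_lhs => rw [hdecomp]
  rw [map_sum]
  refine Finset.sum_congr rfl (fun r _ => ?_)
  rw [map_smul]
  rfl

def colsF (d n : ℕ) (t : ℤ) : Finset (V d) :=
  (box d n).filter
    (fun x => (x ∈ Dset d n ∧ sum1 x ≤ t) ∨ (x ∈ Bset d n ∧ sum1 x ≤ t ∧ ∃ i, x i = 0))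

def rowsF (d n : ℕ) (t : ℤ) : Finset (V d) :=
  (box d n).filter (fun x => x ∈ Dset d n ∧ sum1 x ≤ t + 1)

lemma mem_colsF {t : ℤ} {x : V d} :
    x ∈ colsF d n t ↔
      ((x ∈ Dset d n ∧ sum1 x ≤ t) ∨ (x ∈ Bset d n ∧ sum1 x ≤ t ∧ ∃ i, x i = 0)) := by
  unfold colsF
  rw [Finset.mem_filter]
  constructor
  · exact fun h => h.2
  · intro h
    refine ⟨?_, h⟩
    rcases h with h | h
    · exact Vset_subset_box (Or.inl h.1)
    · exact Vset_subset_box (Or.inr h.1)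

lemma mem_rowsF {t : ℤ} {x : V d} :
    x ∈ rowsF d n t ↔ (x ∈ Dset d n ∧ sum1 x ≤ t + 1) := by
  unfold rowsF
  rw [Finset.mem_filter]
  exact ⟨fun h => h.2, fun h => ⟨Vset_subset_box (Or.inl h.1), h⟩⟩

def maskC (d n : ℕ) (t : ℤ) (u : V d → ℝ) : V d → ℝ :=
  fun p => if p ∈ colsF d n t then u p else 0

lemma lap_add (γ : V d → V d → ℝ) (u v : V d → ℝ) (p : V d) :
    lap d n γ (u + v) p = lap d n γ u p + lap d n γ v p := by
  unfold lap
  rw [← Finset.sum_add_distrib]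
  refine Finset.sum_congr rfl (fun q _ => ?_)
  simp only [Pi.add_apply]
  ring

lemma lap_smul (γ : V d → V d → ℝ) (c : ℝ) (u : V d → ℝ) (p : V d) :
    lap d n γ (c • u) p = c * lap d n γ u p := by
  unfold lap
  rw [Finset.mul_sum]
  refine Finset.sum_congr rfl (fun q _ => ?_)
  simp only [Pi.smul_apply, smul_eq_mul]
  ring

def Smap (d n : ℕ) (γ : V d → V d → ℝ) (t : ℤ) : (V d → ℝ) →ₗ[ℝ] (V d → ℝ) where
  toFun := fun u p => if p ∈ rowsF d n t then lap d n γ (maskC d n t u) p else 0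
  map_add' := by
    intro u v
    funext p
    have hmask : maskC d n t (u + v) = maskC d n t u + maskC d n t v := by
      funext q
      unfold maskC
      by_cases hq : q ∈ colsF d n t <;> simp [hq]
    simp only [hmask, Pi.add_apply]
    by_cases hp : p ∈ rowsF d n t <;> simp [hp, lap_add]
  map_smul' := by
    intro c u
    funext p
    have hmask : maskC d n t (c • u) = c • maskC d n t u := by
      funext q
      unfold maskC
      by_cases hq : q ∈ colsF d n t <;> simp [hq]
    simp only [hmask, RingHom.id_apply, Pi.smul_apply, smul_eq_mul]
    by_cases hp : p ∈ rowsF d n t <;> simp [hp, lap_smul]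

def Fmap (d n : ℕ) (t : ℤ) (w : V d → ℝ) : (V d → ℝ) →ₗ[ℝ] ℝ where
  toFun := fun u => ∑ p ∈ box d n, w p * maskC d n t u p
  map_add' := by
    intro u v
    rw [← Finset.sum_add_distrib]
    refine Finset.sum_congr rfl (fun p _ => ?_)
    unfold maskC
    by_cases hp : p ∈ colsF d n t <;> simp [hp] <;> ring
  map_smul' := by
    intro c u
    simp only [RingHom.id_apply, smul_eq_mul]
    rw [Finset.mul_sum]
    refine Finset.sum_congr rfl (fun p _ => ?_)
    unfold maskC
    by_cases hp : p ∈ colsF d n t <;> simp [hp] <;> ring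

end Setup
section Master

variable {d n : ℕ}

lemma master_eq (γ : V d → V d → ℝ) (t : ℤ)
    (G : (V d → ℝ) →ₗ[ℝ] ℝ) (w : V d → ℝ)
    (hFG : ∀ v, Fmap d n t w v = G (Smap d n γ t v))
    (Λ : V d → ℝ)
    (hΛ : Λ = fun r => if r ∈ rowsF d n t then G (fun p => if p = r then 1 else 0) else 0)
    {x : V d} (hx : x ∈ colsF d n t) :
    w x = (∑ r ∈ nbr d n x, γ x r * Λ r)
      - (if x ∈ rowsF d n t then (∑ q ∈ nbr d n x, γ q x) * Λ x else 0) := by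
  classical
  set δx : V d → ℝ := fun p => if p = x then 1 else 0 with hδx
  have hxbox : x ∈ box d n := Finset.mem_of_mem_filter x hx
  -- Step A : Fmap applied to δx equals w x
  have hA : Fmap d n t w δx = w x := by
    show (∑ p ∈ box d n, w p * maskC d n t δx p) = w x
    have h1 : ∀ p ∈ box d n, w p * maskC d n t δx p = if p = x then w x else 0 := by
      intro p _
      unfold maskC
      by_cases hpx : p = x
      · subst hpx; simp [hδx, hx]
      · simp [hδx, hpx]
    rw [Finset.sum_congr rfl h1, Finset.sum_ite_eq' (box d n) x (fun _ => w x), if_pos hxbox]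
  -- Step B : expand G (Smap δx)
  have hsupp : ∀ p, p ∉ rowsF d n t → Smap d n γ t δx p = 0 := by
    intro p hp
    show (if p ∈ rowsF d n t then _ else 0) = 0
    rw [if_neg hp]
  have hB : G (Smap d n γ t δx) =
      ∑ r ∈ rowsF d n t, Smap d n γ t δx r * Λ r := by
    rw [apply_eq_sum G (rowsF d n t) _ hsupp]
    refine Finset.sum_congr rfl (fun r hr => ?_)
    rw [hΛ]
    simp only [if_pos hr]
  -- Step C : compute Smap δx r for r ∈ rowsF
  have hmask : maskC d n t δx = δx := by
    funext p
    unfold maskC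
    by_cases hpc : p ∈ colsF d n t
    · rw [if_pos hpc]
    · rw [if_neg hpc, hδx]
      have : p ≠ x := fun hc => hpc (hc ▸ hx)
      simp [this]
  have hC : ∀ r ∈ rowsF d n t, Smap d n γ t δx r =
      (if x ∈ nbr d n r then γ x r else 0) - (∑ q ∈ nbr d n r, γ q r) * δx r := by
    intro r hr
    show (if r ∈ rowsF d n t then lap d n γ (maskC d n t δx) r else 0) = _
    rw [if_pos hr, hmask]
    unfold lap
    have expand : ∀ q, γ q r * (δx q - δx r) = (if q = x then γ q r else 0) - γ q r * δx r := by
      intro q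
      rw [hδx]
      by_cases hq : q = x
      · simp only [hq, eq_self_iff_true, if_true]
        by_cases hrx : r = x
        · simp only [hrx, eq_self_iff_true, if_true]; ring
        · simp only [hrx, if_false]; ring
      · simp only [hq, if_false]
        ring
    rw [Finset.sum_congr rfl (fun q _ => expand q), Finset.sum_sub_distrib,
      Finset.sum_ite_eq' (nbr d n r) x (fun q => γ q r), ← Finset.sum_mul]
  -- Step D : assemble
  have hD : ∑ r ∈ rowsF d n t, Smap d n γ t δx r * Λ r =
      (∑ r ∈ nbr d n x, γ x r * Λ r)
        - (if x ∈ rowsF d n t then (∑ q ∈ nbr d n x, γ q x) * Λ x else 0) := by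
    rw [Finset.sum_congr rfl (fun r hr => by rw [hC r hr])]
    have split : ∀ r ∈ rowsF d n t,
        ((if x ∈ nbr d n r then γ x r else 0) - (∑ q ∈ nbr d n r, γ q r) * δx r) * Λ r
        = (if r ∈ nbr d n x then γ x r * Λ r else 0)
          - (if r = x then (∑ q ∈ nbr d n x, γ q x) * Λ x else 0) := by
      intro r _
      have hiff : x ∈ nbr d n r ↔ r ∈ nbr d n x := by
        rw [mem_nbr_iff, mem_nbr_iff]
        exact ⟨adj_symm, adj_symm⟩
      rw [hδx]
      by_cases h1 : r ∈ nbr d n x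
      · rw [if_pos h1, if_pos (hiff.mpr h1)]
        by_cases h2 : r = x
        · subst h2; simp only [eq_self_iff_true, if_true]; ring
        · simp only [h2, if_false]; ring
      · rw [if_neg h1, if_neg (fun hc => h1 (hiff.mp hc))]
        by_cases h2 : r = x
        · subst h2; simp only [eq_self_iff_true, if_true]; ring
        · simp only [h2, if_false]; ring
    rw [Finset.sum_congr rfl split, Finset.sum_sub_distrib]
    congr 1
    · -- first sum
      rw [Finset.sum_ite, Finset.sum_const_zero, add_zero]
      have hflt : (rowsF d n t).filter (fun r => r ∈ nbr d n x)
          = (nbr d n x).filter (fun r => r ∈ rowsF d n t) := by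
        ext r
        simp only [Finset.mem_filter]
        exact and_comm
      rw [hflt]
      refine Finset.sum_subset (Finset.filter_subset _ _) (fun r hr hnr => ?_)
      have hnrows : r ∉ rowsF d n t := fun hc => hnr (Finset.mem_filter.mpr ⟨hr, hc⟩)
      rw [hΛ]
      simp [hnrows]
    · exact Finset.sum_ite_eq' (rowsF d n t) x (fun r => (∑ q ∈ nbr d n x, γ q x) * Λ x)
  rw [← hA, hFG δx, hB, hD]

end Master
section Measure

lemma sum_split_two {M : Type*} [AddCommMonoid M] {d : ℕ} (f : Fin d → M) {i j : Fin d}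
    (h : j ≠ i) :
    ∑ k, f k = f i + (f j + ∑ k ∈ (Finset.univ.erase i).erase j, f k) := by
  rw [← Finset.add_sum_erase _ f (Finset.mem_univ i),
    ← Finset.add_sum_erase _ f (Finset.mem_erase.mpr ⟨h, Finset.mem_univ j⟩)]

/-- the primary + secondary potential used in the sweep -/
def Pot {d : ℕ} (p₀ : V d) (x : V d) : ℕ :=
  (d+1) * (∑ k, (p₀ k - x k).toNat) + ∑ k : Fin d, ((k : ℕ)+1) * (p₀ k - x k).toNat

lemma Pot_step {d : ℕ} (p₀ x : V d) (i j : Fin d) (hij : j ≠ i) (hdef : x i < p₀ i)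
    (hmax : x j < p₀ j → (j:ℕ) < (i:ℕ)) :
    Pot p₀ x < Pot p₀ (x - unitv d i + unitv d j) := by
  classical
  set y := x - unitv d i + unitv d j with hy
  have hyi : y i = x i - 1 := by
    rw [hy]; simp [unitv_apply_self, unitv_apply_ne hij, unitv_apply_ne (Ne.symm hij)]
  have hyj : y j = x j + 1 := by
    rw [hy]; simp [unitv_apply_self, unitv_apply_ne hij, unitv_apply_ne (Ne.symm hij)]
  have hyk : ∀ k, k ≠ i → k ≠ j → y k = x k := by
    intro k hki hkj
    rw [hy]
    simp [unitv_apply_ne hki, unitv_apply_ne hkj]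
  unfold Pot
  rw [sum_split_two (fun k => (p₀ k - x k).toNat) hij,
     sum_split_two (fun k => (p₀ k - y k).toNat) hij,
     sum_split_two (fun k : Fin d => ((k:ℕ)+1) * (p₀ k - x k).toNat) hij,
     sum_split_two (fun k : Fin d => ((k:ℕ)+1) * (p₀ k - y k).toNat) hij]
  have htail1 : ∑ k ∈ (Finset.univ.erase i).erase j, (p₀ k - y k).toNat
      = ∑ k ∈ (Finset.univ.erase i).erase j, (p₀ k - x k).toNat := by
    refine Finset.sum_congr rfl (fun k hk => ?_)
    have hkj := (Finset.mem_erase.mp hk).1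
    have hki := (Finset.mem_erase.mp (Finset.mem_erase.mp hk).2).1
    rw [hyk k hki hkj]
  have htail2 : ∑ k ∈ (Finset.univ.erase i).erase j, ((k:ℕ)+1) * (p₀ k - y k).toNat
      = ∑ k ∈ (Finset.univ.erase i).erase j, ((k:ℕ)+1) * (p₀ k - x k).toNat := by
    refine Finset.sum_congr rfl (fun k hk => ?_)
    have hkj := (Finset.mem_erase.mp hk).1
    have hki := (Finset.mem_erase.mp (Finset.mem_erase.mp hk).2).1
    rw [hyk k hki hkj]
  rw [htail1, htail2]
  have hbi : (p₀ i - y i).toNat = (p₀ i - x i).toNat + 1 := by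
    rw [hyi]; omega
  rw [hbi]
  by_cases hc : x j < p₀ j
  · have hji : (j:ℕ) < (i:ℕ) := hmax hc
    have hbj : (p₀ j - x j).toNat = (p₀ j - y j).toNat + 1 := by
      rw [hyj]; omega
    rw [hbj]
    set A := (p₀ i - x i).toNat
    set B := (p₀ j - y j).toNat
    set T1 := ∑ k ∈ (Finset.univ.erase i).erase j, (p₀ k - x k).toNat
    set T2 := ∑ k ∈ (Finset.univ.erase i).erase j, ((k:ℕ)+1) * (p₀ k - x k).toNat
    have e1 : ((i:ℕ)+1) * (A + 1) = ((i:ℕ)+1) * A + ((i:ℕ)+1) := by ring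
    have e2 : ((j:ℕ)+1) * (B + 1) = ((j:ℕ)+1) * B + ((j:ℕ)+1) := by ring
    rw [e1, e2]
    have hji' : (j:ℕ) + 1 < (i:ℕ) + 1 := by omega
    nlinarith [hji']
  · have hbj : (p₀ j - y j).toNat = 0 := by rw [hyj]; omega
    have hbj' : (p₀ j - x j).toNat = 0 := by omega
    rw [hbj, hbj']
    set A := (p₀ i - x i).toNat
    have e1 : ((i:ℕ)+1) * (A + 1) = ((i:ℕ)+1) * A + ((i:ℕ)+1) := by ring
    rw [e1]
    nlinarith [Nat.zero_le ((i:ℕ)+1)]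

lemma Pot_lt_max {d n : ℕ} {p₀ x : V d} (hp₀ : p₀ ∈ Dset d n) (hx : x ∈ Dset d n) :
    Pot p₀ x < (2*d+2)*(d*n) + 1 := by
  unfold Pot
  have hN : ∑ k, (p₀ k - x k).toNat ≤ d * n := by
    calc ∑ k, (p₀ k - x k).toNat ≤ ∑ _k : Fin d, n := by
          refine Finset.sum_le_sum (fun k _ => ?_)
          have h1 := (hp₀ k).2
          have h2 := (hx k).1
          omega
      _ = d * n := by simp [Finset.sum_const, mul_comm]
  have hσ : ∑ k : Fin d, ((k:ℕ)+1) * (p₀ k - x k).toNat ≤ d * (d * n) := by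
    calc ∑ k : Fin d, ((k:ℕ)+1) * (p₀ k - x k).toNat ≤ ∑ k : Fin d, d * (p₀ k - x k).toNat := by
          refine Finset.sum_le_sum (fun k _ => ?_)
          have : (k:ℕ) + 1 ≤ d := k.2
          exact Nat.mul_le_mul_right _ this
      _ = d * ∑ k, (p₀ k - x k).toNat := by rw [Finset.mul_sum]
      _ ≤ d * (d * n) := Nat.mul_le_mul_left _ hN
  have hd1 : (d+1) * (∑ k, (p₀ k - x k).toNat) ≤ (d+1) * (d*n) := Nat.mul_le_mul_left _ hN
  nlinarith

end Measure
section UC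

lemma lt_aux1 (C b a x y : ℕ) (h : b < a) (hx : x ≤ C) :
    (C+1)*b + x < (C+1)*a + y := by
  have h2 : (C+1)*b + (C+1) = (C+1)*(b+1) := by ring
  have h3 : (C+1)*(b+1) ≤ (C+1)*a := Nat.mul_le_mul_left _ h
  omega

lemma lt_aux2 (C s Px Py : ℕ) (h : Py < Px) (hPy : Py < C) :
    (C+1)*s + (C - Px) < (C+1)*s + (C - Py) := by
  have := Nat.sub_lt_sub_left hPy h
  omega

lemma sum1_nonneg_of_Dset {d n : ℕ} {x : V d} (hx : x ∈ Dset d n) : 0 ≤ sum1 x :=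
  Finset.sum_nonneg (fun j _ => by have := (hx j).1; omega)

lemma unique_continuation {d n : ℕ} (γ : V d → V d → ℝ)
    (hγ : GoodCond d n γ) {t : ℤ} {p₀ : V d} (hp₀ : p₀ ∈ L d n (t+1))
    (Λ : V d → ℝ)
    (hΛsupp : ∀ r, r ∉ rowsF d n t → Λ r = 0)
    (hEQ : ∀ x ∈ colsF d n t, (¬ ∃ i, x = p₀ - unitv d i) →
      (∑ r ∈ nbr d n x, γ x r * Λ r)
        - (if x ∈ rowsF d n t then (∑ q ∈ nbr d n x, γ q x) * Λ x else 0) = 0) :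
    ∀ x, x ≠ p₀ → Λ x = 0 := by
  classical
  obtain ⟨hp₀D, hp₀sum⟩ := hp₀
  set Pmax : ℕ := (2*d+2)*(d*n) + 1 with hPmax
  suffices H : ∀ N : ℕ, ∀ x : V d,
      (Pmax+1) * (sum1 x).toNat + (Pmax - Pot p₀ x) < N → x ≠ p₀ → Λ x = 0 by
    exact fun x hx => H ((Pmax+1) * (sum1 x).toNat + (Pmax - Pot p₀ x) + 1) x (by omega) hx
  intro N
  induction N with
  | zero => exact fun x hx => absurd hx (Nat.not_lt_zero _)
  | succ N IH =>
    intro x hΨx hne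
    by_cases hrow : x ∈ rowsF d n t
    swap
    · exact hΛsupp x hrow
    obtain ⟨hxD, hxsum⟩ := mem_rowsF.mp hrow
    have hΨxN : (Pmax+1) * (sum1 x).toNat + (Pmax - Pot p₀ x) ≤ N := by omega
    by_cases hone : ∃ k, x k = 1
    · -- `x` next to the coordinate-zero boundary : single-term boundary column
      obtain ⟨k, hk⟩ := hone
      set b := x - unitv d k with hb
      have hbk : b k = 0 := by rw [hb]; simp [unitv_apply_self]; omega
      have hbx : b + unitv d k = x := by rw [hb]; abel
      have hbnD : b ∉ Dset d n := by
        intro hc; have := (hc k).1; omega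
      have hdistbx : dist1 b x = 1 := by
        rw [dist1_comm]; exact dist1_sub_unit x k
      have hbB : b ∈ Bset d n := ⟨hbnD, x, hxD, hdistbx⟩
      have hbsum : sum1 b = sum1 x - 1 := by rw [hb]; exact sum1_sub_unit x k
      have hbcols : b ∈ colsF d n t := by
        rw [mem_colsF]
        right
        exact ⟨hbB, by omega, ⟨k, hbk⟩⟩
      have hbnM : ¬ ∃ i, b = p₀ - unitv d i := by
        rintro ⟨i, hbi⟩
        by_cases hik : i = k
        · apply hne
          funext j
          have hcf := congrFun hbi j
          rw [hik] at hcf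
          by_cases hji : j = k
          · subst hji
            have h0 : b j = p₀ j - 1 := by
              simpa [unitv_apply_self] using hcf
            omega
          · simp only [Pi.sub_apply, unitv_apply_ne hji, sub_zero] at hcf
            have hbjx : b j = x j := by rw [hb]; simp [unitv_apply_ne hji]
            omega
        · have h1 : b k = p₀ k := by
            have hcf := congrFun hbi k
            simpa [unitv_apply_ne (fun hc : k = i => hik hc.symm)] using hcf
          have := (hp₀D k).1
          omega
      have hbnrow : b ∉ rowsF d n t := fun hc => hbnD (mem_rowsF.mp hc).1
      have heq := hEQ b hbcols hbnM
      rw [if_neg hbnrow, sub_zero] at heq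
      have hAdjbx : Adj d n b x := ⟨hdistbx, Or.inr hbB, Or.inl hxD, Or.inr hxD⟩
      have hxnbr : x ∈ nbr d n b := mem_nbr_iff.mpr hAdjbx
      have hsingle : ∑ r ∈ nbr d n b, γ b r * Λ r = γ b x * Λ x := by
        refine Finset.sum_eq_single_of_mem x hxnbr (fun r hr hrx => ?_)
        exfalso
        have hAdj := mem_nbr_iff.mp hr
        have hrD : r ∈ Dset d n := by
          rcases hAdj.2.2.2 with h | h
          · exact absurd h hbnD
          · exact h
        have := bset_unique_nbr hbk hrD hAdj.1
        rw [this, hbx] at hrx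
        exact hrx rfl
      rw [hsingle] at heq
      rcases mul_eq_zero.mp heq with h | h
      · exact absurd h (ne_of_gt (hγ.2 b x hAdjbx))
      · exact h
    · -- interior sweep step
      push_neg at hone
      have hx2 : ∀ j, 2 ≤ x j := by
        intro j
        have h1 := (hxD j).1
        have := hone j
        omega
      have hdefex : ∃ j, x j < p₀ j := by
        by_contra hc
        push_neg at hc
        apply hne
        funext j
        by_contra hj
        have hlt : p₀ j < x j := lt_of_le_of_ne (hc j) (fun hc2 => hj hc2.symm)
        have : sum1 p₀ < sum1 x :=
          Finset.sum_lt_sum (fun i _ => hc i) ⟨j, Finset.mem_univ j, hlt⟩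
        omega
      set DS : Finset (Fin d) := Finset.univ.filter (fun j => x j < p₀ j) with hDS
      have hDSne : DS.Nonempty := by
        obtain ⟨j, hj⟩ := hdefex
        exact ⟨j, Finset.mem_filter.mpr ⟨Finset.mem_univ j, hj⟩⟩
      set i₀ := DS.max' hDSne with hi₀
      have hidef : x i₀ < p₀ i₀ := by
        have h := DS.max'_mem hDSne
        exact (Finset.mem_filter.mp h).2
      have himax : ∀ j, x j < p₀ j → j ≤ i₀ := by
        intro j hj
        exact DS.le_max' j (Finset.mem_filter.mpr ⟨Finset.mem_univ j, hj⟩)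
      set q := x - unitv d i₀ with hq
      have hqi : q i₀ = x i₀ - 1 := by rw [hq]; simp [unitv_apply_self]
      have hqj : ∀ j, j ≠ i₀ → q j = x j := by
        intro j hj; rw [hq]; simp [unitv_apply_ne hj]
      have hqx : q + unitv d i₀ = x := by rw [hq]; abel
      have hqD : q ∈ Dset d n := by
        intro j
        by_cases hj : j = i₀
        · rw [hj, hqi]
          have h2 := hx2 i₀
          have h3 := (hxD i₀).2
          omega
        · rw [hqj j hj]; exact hxD j
      have hqsum : sum1 q = sum1 x - 1 := by rw [hq]; exact sum1_sub_unit x i₀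
      have hqcols : q ∈ colsF d n t := by
        rw [mem_colsF]; left; exact ⟨hqD, by omega⟩
      have hqrow : q ∈ rowsF d n t := mem_rowsF.mpr ⟨hqD, by omega⟩
      have hqnM : ¬ ∃ i, q = p₀ - unitv d i := by
        rintro ⟨i, hqi'⟩
        by_cases hii : i = i₀
        · apply hne
          funext j
          have hcf := congrFun hqi' j
          rw [hii] at hcf
          by_cases hji : j = i₀
          · rw [hji]
            have h0 : q i₀ = p₀ i₀ - 1 := by
              have hcf2 := congrFun hqi' i₀
              rw [hii] at hcf2
              simpa [unitv_apply_self] using hcf2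
            have h2 := hqi
            omega
          · simp only [Pi.sub_apply, unitv_apply_ne hji, sub_zero] at hcf
            have h3 := hqj j hji
            omega
        · have h1 : q i₀ = p₀ i₀ := by
            have hcf := congrFun hqi' i₀
            simpa [unitv_apply_ne (fun hc : i₀ = i => hii hc.symm)] using hcf
          omega
      have hqnep₀ : q ≠ p₀ := by
        intro hc
        have := congrArg sum1 hc
        omega
      have hΛq : Λ q = 0 := by
        apply IH q _ hqnep₀
        have hq0 : (0:ℤ) ≤ sum1 q := sum1_nonneg_of_Dset hqD
        have hstep : (sum1 q).toNat < (sum1 x).toNat := by omega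
        calc (Pmax+1) * (sum1 q).toNat + (Pmax - Pot p₀ q)
            < (Pmax+1) * (sum1 x).toNat + (Pmax - Pot p₀ x) :=
              lt_aux1 Pmax _ _ _ _ hstep (Nat.sub_le _ _)
          _ ≤ N := hΨxN
      have heq := hEQ q hqcols hqnM
      rw [if_pos hqrow, hΛq, mul_zero, sub_zero] at heq
      have hAdjqx : Adj d n q x := by
        refine ⟨?_, Or.inl hqD, Or.inl hxD, Or.inl hqD⟩
        rw [← hqx]
        exact dist1_add_unit q i₀
      have hxnbrq : x ∈ nbr d n q := mem_nbr_iff.mpr hAdjqx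
      have hsingle : ∑ r ∈ nbr d n q, γ q r * Λ r = γ q x * Λ x := by
        refine Finset.sum_eq_single_of_mem x hxnbrq (fun r hr hrx => ?_)
        have hAdj := mem_nbr_iff.mp hr
        obtain ⟨j, hj | hj⟩ := eq_add_or_sub_of_dist1 hAdj.1
        · -- r = q + unit j  (same slice as x)
          by_cases hji : j = i₀
          · exfalso; apply hrx; rw [hj, hji, hqx]
          · by_cases hrrow : r ∈ rowsF d n t
            swap
            · rw [hΛsupp r hrrow, mul_zero]
            · have hrne : r ≠ p₀ := by
                intro hc
                apply hqnM
                refine ⟨j, ?_⟩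
                rw [← hc, hj]; abel
              have hrval : r = x - unitv d i₀ + unitv d j := by rw [hj, hq]
              have hPot : Pot p₀ x < Pot p₀ r := by
                rw [hrval]
                refine Pot_step p₀ x i₀ j hji hidef (fun hdefj => ?_)
                have hle : (j:ℕ) ≤ (i₀:ℕ) := himax j hdefj
                have hne2 : (j:ℕ) ≠ (i₀:ℕ) := fun hc => hji (Fin.ext hc)
                omega
              have hsum1r : sum1 r = sum1 x := by
                rw [hj, sum1_add_unit]; omega
              have hΛr : Λ r = 0 := by
                apply IH r _ hrne
                have hPxlt : Pot p₀ x < Pmax := by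
                  rw [hPmax]; exact Pot_lt_max hp₀D hxD
                calc (Pmax+1) * (sum1 r).toNat + (Pmax - Pot p₀ r)
                    = (Pmax+1) * (sum1 x).toNat + (Pmax - Pot p₀ r) := by rw [hsum1r]
                  _ < (Pmax+1) * (sum1 x).toNat + (Pmax - Pot p₀ x) :=
                      lt_aux2 Pmax _ _ _ hPot hPxlt
                  _ ≤ N := hΨxN
              rw [hΛr, mul_zero]
        · -- r = q - unit j (lower slice)
          by_cases hrrow : r ∈ rowsF d n t
          swap
          · rw [hΛsupp r hrrow, mul_zero]
          · have hrD := (mem_rowsF.mp hrrow).1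
            have hsum1r : sum1 r = sum1 x - 2 := by
              rw [hj, sum1_sub_unit]; omega
            have hrne : r ≠ p₀ := by
              intro hc; rw [hc] at hsum1r; omega
            have hΛr : Λ r = 0 := by
              apply IH r _ hrne
              have hr0 : (0:ℤ) ≤ sum1 r := sum1_nonneg_of_Dset hrD
              have hstep : (sum1 r).toNat < (sum1 x).toNat := by omega
              calc (Pmax+1) * (sum1 r).toNat + (Pmax - Pot p₀ r)
                  < (Pmax+1) * (sum1 x).toNat + (Pmax - Pot p₀ x) :=
                    lt_aux1 Pmax _ _ _ _ hstep (Nat.sub_le _ _)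
                _ ≤ N := hΨxN
            rw [hΛr, mul_zero]
      rw [hsingle] at heq
      rcases mul_eq_zero.mp heq with h | h
      · exact absurd h (ne_of_gt (hγ.2 q x hAdjqx))
      · exact h

end UC
section Final

lemma subunit_cases {d n : ℕ} {t : ℤ} {p₀ : V d} (hp₀ : p₀ ∈ L d n (t+1)) (i : Fin d) :
    ((p₀ - unitv d i) ∈ Dset d n ∧ sum1 (p₀ - unitv d i) = t) ∨
    ((p₀ - unitv d i) ∈ Bset d n ∧ sum1 (p₀ - unitv d i) = t ∧ (p₀ - unitv d i) i = 0) := by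
  obtain ⟨hD, hsum⟩ := hp₀
  have hsum' : sum1 (p₀ - unitv d i) = t := by rw [sum1_sub_unit]; omega
  have hci : (p₀ - unitv d i) i = p₀ i - 1 := by simp [unitv_apply_self]
  have hcj : ∀ j, j ≠ i → (p₀ - unitv d i) j = p₀ j := fun j hj => by
    simp [unitv_apply_ne hj]
  by_cases h2 : 2 ≤ p₀ i
  · left
    refine ⟨fun j => ?_, hsum'⟩
    by_cases hj : j = i
    · rw [hj, hci]
      have := (hD i).2
      omega
    · rw [hcj j hj]; exact hD j
  · right
    have h1 : p₀ i = 1 := by have := (hD i).1; omega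
    have hzero : (p₀ - unitv d i) i = 0 := by rw [hci]; omega
    refine ⟨⟨?_, p₀, hD, ?_⟩, hsum', hzero⟩
    · intro hc
      have h3 := (hc i).1
      omega
    · rw [dist1_comm]; exact dist1_sub_unit p₀ i

lemma subunit_mem_colsF {d n : ℕ} {t : ℤ} {p₀ : V d} (hp₀ : p₀ ∈ L d n (t+1)) (i : Fin d) :
    p₀ - unitv d i ∈ colsF d n t := by
  rcases subunit_cases hp₀ i with h | h
  · exact mem_colsF.mpr (Or.inl ⟨h.1, le_of_eq h.2⟩)
  · exact mem_colsF.mpr (Or.inr ⟨h.1, le_of_eq h.2.1, ⟨i, h.2.2⟩⟩)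

lemma subunit_mem_LSJS {d n : ℕ} {t : ℤ} {p₀ : V d} (hp₀ : p₀ ∈ L d n (t+1)) (i : Fin d) :
    p₀ - unitv d i ∈ LS d n t ∪ JS d n t := by
  rcases subunit_cases hp₀ i with h | h
  · exact Or.inl ⟨h.1, le_of_eq h.2⟩
  · exact Or.inr (Or.inl ⟨h.1, le_of_eq h.2.1, ⟨i, h.2.2⟩⟩)

theorem stmt15' (d n : ℕ) (hd : 2 ≤ d) (hn : 1 ≤ n)
    (γ : V d → V d → ℝ) (hγ : GoodCond d n γ)
    (t : ℤ) (ht1 : (d : ℤ) - 1 ≤ t) (ht2 : t ≤ (d : ℤ) * n - 1)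
    (p₀ : V d) (hp₀ : p₀ ∈ L d n (t + 1))
    (w : V d → ℝ)
    (hsupp : ∀ q, q ∉ (L d n t ∪ K d n t) ∩ {q | Adj d n p₀ q} → w q = 0)
    (horth : ∀ u ∈ Uset d n γ t, dot d n w u = 0) :
    ∃ α : ℝ, w = α • rst ((L d n t ∪ K d n t) ∩ {q | Adj d n p₀ q})
      (fun q => γ p₀ q) := by
  classical
  have hp₀D : p₀ ∈ Dset d n := hp₀.1
  have hp₀sum : sum1 p₀ = t + 1 := hp₀.2
  have hM_LSJS : ∀ z ∈ (L d n t ∪ K d n t) ∩ {q | Adj d n p₀ q}, z ∈ LS d n t ∪ JS d n t := by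
    intro z hz
    obtain ⟨i, rfl⟩ := (mem_M_iff hp₀).mp hz
    exact subunit_mem_LSJS hp₀ i
  -- Step 1 : the orthogonality hypothesis gives the kernel condition
  have hker : ∀ v, Smap d n γ t v = 0 → Fmap d n t w v = 0 := by
    intro v hv
    set wb : V d → ℝ := maskC d n t v with hwb
    have hwbsupp : ∀ p, p ∉ colsF d n t → wb p = 0 := by
      intro p hp
      rw [hwb]
      exact if_neg hp
    have hcolsVset : ∀ p, p ∈ colsF d n t → p ∈ Vset d n := by
      intro p hp
      rcases mem_colsF.mp hp with h | h
      · exact Or.inl h.1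
      · exact Or.inr h.1
    have hcolsSum : ∀ p, p ∈ colsF d n t → sum1 p ≤ t := by
      intro p hp
      rcases mem_colsF.mp hp with h | h
      · exact h.2
      · exact h.2.1
    set u : V d → ℝ := rst (LS d n t ∪ JS d n t) wb with hu
    set φ : V d → ℝ := fun p => if p ∈ Bset d n then wb p else 0 with hφ
    have hUmem : u ∈ Uset d n γ t := by
      refine ⟨?_, φ, wb, ?_, ⟨?_, ?_, ?_⟩, ?_, ?_⟩
      · intro p hp
        simp [hu, rst, hp]
      · -- φ supported on JS
        intro p hp
        by_cases hpB : p ∈ Bset d n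
        · have hφp : φ p = wb p := by simp [hφ, hpB]
          rw [hφp]
          apply hwbsupp
          intro hpc
          rcases mem_colsF.mp hpc with h | h
          · exact hpB.1 h.1
          · exact hp (Or.inl ⟨hpB, h.2.1, h.2.2⟩)
        · simp [hφ, hpB]
      · -- zero outside Vset
        intro p hp
        exact hwbsupp p (fun hc => hp (hcolsVset p hc))
      · -- harmonicity
        intro p hpD
        by_cases hpR : p ∈ rowsF d n t
        · have hcf := congrFun hv p
          simp only [Pi.zero_apply] at hcf
          rw [show Smap d n γ t v p
              = (if p ∈ rowsF d n t then lap d n γ (maskC d n t v) p else 0) from rfl,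
            if_pos hpR] at hcf
          exact hcf
        · have hpsum : ¬ sum1 p ≤ t + 1 := fun hc => hpR (mem_rowsF.mpr ⟨hpD, hc⟩)
          unfold lap
          refine Finset.sum_eq_zero (fun q hq => ?_)
          have hAdj := mem_nbr_iff.mp hq
          have hsq := adj_sum1 hAdj
          have hq0 : wb q = 0 := by
            apply hwbsupp
            intro hc
            have := hcolsSum q hc
            omega
          have hp0 : wb p = 0 := by
            apply hwbsupp
            intro hc
            have := hcolsSum p hc
            omega
          rw [hq0, hp0]
          ring
      · -- boundary data
        intro p hpB
        simp [hφ, hpB]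
      · -- vanishing on L (t+1)
        intro p hpL
        apply hwbsupp
        intro hc
        have h1 := hcolsSum p hc
        have h2 := hpL.2
        omega
      · -- u = wb on LS ∪ JS
        intro p hp
        simp [hu, rst, hp]
    have hdot := horth u hUmem
    calc Fmap d n t w v = dot d n w u := by
          show (∑ p ∈ box d n, w p * maskC d n t v p) = ∑ p ∈ box d n, w p * u p
          refine Finset.sum_congr rfl (fun p _ => ?_)
          by_cases hp : p ∈ LS d n t ∪ JS d n t
          · have hup : u p = wb p := by simp [hu, rst, hp]
            rw [hup, hwb]
          · rw [hsupp p (fun hc => hp (hM_LSJS p hc)), zero_mul, zero_mul]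
      _ = 0 := hdot
  -- Step 2 : dual factorization
  obtain ⟨G, hFG⟩ := dual_factor (Smap d n γ t) (Fmap d n t w) hker
  set Λ : V d → ℝ :=
    fun r => if r ∈ rowsF d n t then G (fun p => if p = r then 1 else 0) else 0 with hΛ
  have hΛsupp : ∀ r, r ∉ rowsF d n t → Λ r = 0 := by
    intro r hr
    rw [hΛ]
    exact if_neg hr
  have hEQ0 : ∀ x ∈ colsF d n t,
      w x = (∑ r ∈ nbr d n x, γ x r * Λ r)
        - (if x ∈ rowsF d n t then (∑ q ∈ nbr d n x, γ q x) * Λ x else 0) :=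
    fun x hx => master_eq γ t G w hFG Λ hΛ hx
  have hEQ : ∀ x ∈ colsF d n t, (¬ ∃ i, x = p₀ - unitv d i) →
      (∑ r ∈ nbr d n x, γ x r * Λ r)
        - (if x ∈ rowsF d n t then (∑ q ∈ nbr d n x, γ q x) * Λ x else 0) = 0 := by
    intro x hx hnx
    have h1 := hEQ0 x hx
    have h2 : w x = 0 := by
      apply hsupp
      intro hc
      exact hnx ((mem_M_iff hp₀).mp hc)
    rw [h2] at h1
    exact h1.symm
  -- Step 3 : unique continuation
  have hUC := unique_continuation γ hγ hp₀ Λ hΛsupp hEQ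
  -- Step 4 : conclusion
  refine ⟨Λ p₀, funext (fun z => ?_)⟩
  by_cases hz : z ∈ (L d n t ∪ K d n t) ∩ {q | Adj d n p₀ q}
  · obtain ⟨i, hzi⟩ := (mem_M_iff hp₀).mp hz
    have hzcols : z ∈ colsF d n t := by rw [hzi]; exact subunit_mem_colsF hp₀ i
    have hAdjzp₀ : Adj d n z p₀ := adj_symm hz.2
    have hp₀nbr : p₀ ∈ nbr d n z := mem_nbr_iff.mpr hAdjzp₀
    have hsum1z : sum1 z = t := by
      rcases hz.1 with h | h
      · exact h.2
      · exact h.2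
    have hznep₀ : z ≠ p₀ := by
      intro hc
      rw [hc] at hsum1z
      omega
    have hΛz : Λ z = 0 := hUC z hznep₀
    have h1 := hEQ0 z hzcols
    have hifzero : (if z ∈ rowsF d n t then (∑ q ∈ nbr d n z, γ q z) * Λ z else 0) = 0 := by
      rw [hΛz]
      by_cases hzr : z ∈ rowsF d n t
      · rw [if_pos hzr, mul_zero]
      · exact if_neg hzr
    rw [hifzero, sub_zero] at h1
    have hsingle : ∑ r ∈ nbr d n z, γ z r * Λ r = γ z p₀ * Λ p₀ :=
      Finset.sum_eq_single_of_mem p₀ hp₀nbr (fun r _ hrne => by rw [hUC r hrne, mul_zero])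
    rw [hsingle] at h1
    have hRHS : (Λ p₀ • rst ((L d n t ∪ K d n t) ∩ {q | Adj d n p₀ q}) (fun q => γ p₀ q)) z
        = Λ p₀ * γ p₀ z := by
      simp only [Pi.smul_apply, smul_eq_mul, rst]
      rw [if_pos hz]
    rw [hRHS, h1, hγ.1 z p₀]
    ring
  · rw [hsupp z hz]
    have hRHS : (Λ p₀ • rst ((L d n t ∪ K d n t) ∩ {q | Adj d n p₀ q}) (fun q => γ p₀ q)) z
        = 0 := by
      simp only [Pi.smul_apply, smul_eq_mul, rst]
      rw [if_neg hz, mul_zero]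
    rw [hRHS]

end Final

/-- for `p₀ ∈ L_{t+1}` and `M = (L_t ∪ K_t) ∩ N(p₀)`, any `w`
supported on `M` orthogonal to all restrictions of `𝒰^{(t)}` is a scalar multiple
of `(γ_{p₀ q})_{q ∈ M}`. -/
theorem stmt15 (d n : ℕ) (hd : 2 ≤ d) (hn : 1 ≤ n)
    (γ : V d → V d → ℝ) (hγ : GoodCond d n γ)
    (t : ℤ) (ht1 : (d : ℤ) - 1 ≤ t) (ht2 : t ≤ (d : ℤ) * n - 1)
    (p₀ : V d) (hp₀ : p₀ ∈ L d n (t + 1))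
    (w : V d → ℝ)
    (hsupp : ∀ q, q ∉ (L d n t ∪ K d n t) ∩ {q | Adj d n p₀ q} → w q = 0)
    (horth : ∀ u ∈ Uset d n γ t, dot d n w u = 0) :
    ∃ α : ℝ, w = α • rst ((L d n t ∪ K d n t) ∩ {q | Adj d n p₀ q})
      (fun q => γ p₀ q) :=
  stmt15' d n hd hn γ hγ t ht1 ht2 p₀ hp₀ w hsupp horth

end DiscreteCalderon
end
end

section
/- In the d-dimensional lattice graph, suppose coefficients c : L_{t+1} → ℝ satisfy Σ_{q ∈ N(p) ∩ L_{t+1}} c_q γ_{pq} = 0 for every p ∈ L_t ∪ K_t^−. Extending c by zero to L_t^S ∪ J_t^S, the function c is γ-harmonic on L_t, vanishes on J_t^S together with its boundary current, and hence c ≡ 0 on L_{t+1}. -/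
noncomputable section
open Classical Finset

namespace DiscreteCalderon

lemma dist1_one {d : ℕ} {p r : V d} (h : dist1 p r = 1) :
    ∃ j, |p j - r j| = 1 ∧ ∀ i, i ≠ j → p i = r i := by
  have hex : ∃ j, |p j - r j| ≠ 0 := by
    by_contra hc
    push_neg at hc
    have h0 : dist1 p r = 0 := Finset.sum_eq_zero (fun i _ => hc i)
    omega
  obtain ⟨j, hj⟩ := hex
  have h1 : |p j - r j| ≤ 1 := by
    have h2 : |p j - r j| ≤ ∑ i, |p i - r i| :=
      Finset.single_le_sum (f := fun i => |p i - r i|) (fun i _ => abs_nonneg _) (Finset.mem_univ j)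
    unfold dist1 at h; omega
  have hj1 : |p j - r j| = 1 := by have := abs_nonneg (p j - r j); omega
  refine ⟨j, hj1, fun i hi => ?_⟩
  have hsplit : dist1 p r = |p j - r j| + ∑ i ∈ Finset.univ.erase j, |p i - r i| := by
    unfold dist1
    rw [← Finset.add_sum_erase _ _ (Finset.mem_univ j)]
  have hnn : (0:ℤ) ≤ ∑ i ∈ Finset.univ.erase j, |p i - r i| :=
    Finset.sum_nonneg (fun i _ => abs_nonneg _)
  have hzero : ∑ i ∈ Finset.univ.erase j, |p i - r i| = 0 := by omega
  have hterm := (Finset.sum_eq_zero_iff_of_nonneg (fun i _ => abs_nonneg _)).mp hzero i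
    (Finset.mem_erase.mpr ⟨hi, Finset.mem_univ i⟩)
  have := abs_eq_zero.mp hterm
  linarith

lemma sum1_diff {d : ℕ} {p r : V d} (j : Fin d) (hj : ∀ i, i ≠ j → p i = r i) :
    sum1 r - sum1 p = r j - p j := by
  unfold sum1
  rw [← Finset.sum_sub_distrib]
  exact Finset.sum_eq_single_of_mem j (Finset.mem_univ j)
    (fun i _ hi => by rw [hj i hi]; ring)

lemma sum1_adj {d : ℕ} {p q : V d} (h : dist1 p q = 1) :
    sum1 q = sum1 p + 1 ∨ sum1 q = sum1 p - 1 := by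
  obtain ⟨j, hj1, hj2⟩ := dist1_one h
  have hdiff := sum1_diff j hj2
  have : p j - q j = 1 ∨ p j - q j = -1 := (abs_eq (by norm_num)).mp hj1
  omega

lemma step_up {d : ℕ} {p r : V d} (h1 : dist1 p r = 1) (h2 : sum1 r = sum1 p + 1) :
    ∃ j, r j = p j + 1 ∧ ∀ i, i ≠ j → r i = p i := by
  obtain ⟨j, hj1, hj2⟩ := dist1_one h1
  have hdiff := sum1_diff j hj2
  have : p j - r j = 1 ∨ p j - r j = -1 := (abs_eq (by norm_num)).mp hj1
  exact ⟨j, by omega, fun i hi => (hj2 i hi).symm⟩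

/-- if coefficients `c` on `L_{t+1}` satisfy
`∑_{q ∈ N(p) ∩ L_{t+1}} γ_{pq} c_q = 0` for all `p ∈ L_t ∪ K_t^-`, then the
zero-extension of `c` is γ-harmonic on `L_t`, has vanishing Cauchy data on
`J_t^S`, and hence `c ≡ 0` on `L_{t+1}`. -/
theorem stmt19 (d n : ℕ) (hd : 2 ≤ d) (hn : 1 ≤ n)
    (γ : V d → V d → ℝ) (hγ : GoodCond d n γ)
    (t : ℤ) (ht1 : (d : ℤ) - 1 ≤ t) (ht2 : t ≤ (d : ℤ) * n - 1)
    (c : V d → ℝ)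
    (hsupp : ∀ p, p ∉ L d n (t + 1) → c p = 0)
    (hlin : ∀ p ∈ L d n t ∪ Km d n t,
      ∑ q ∈ (nbr d n p).filter (fun q => q ∈ L d n (t + 1)), γ p q * c q = 0) :
    (∀ p ∈ L d n t, lap d n γ c p = 0) ∧
    (∀ p ∈ JS d n t, c p = 0 ∧ cur d n γ c p = 0) ∧
    (∀ p ∈ L d n (t + 1), c p = 0) := by
  have hd0 : 0 < d := by omega
  set i0 : Fin d := ⟨0, hd0⟩ with hi0
  -- Part 3: unique continuation by induction on the first coordinate.
  have key : ∀ m : ℕ, ∀ q, q ∈ L d n (t+1) → (q i0).toNat = m → c q = 0 := by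
    intro m
    induction m using Nat.strong_induction_on with
    | _ m IH =>
      intro q hq hqm
      obtain ⟨hqD, hqs⟩ := hq
      set p : V d := Function.update q i0 (q i0 - 1) with hp
      have hpi0 : p i0 = q i0 - 1 := by simp [hp]
      have hpother : ∀ i, i ≠ i0 → p i = q i := fun i hi => Function.update_of_ne hi _ _
      have habs : ∀ i, |p i - q i| = if i = i0 then 1 else 0 := by
        intro i
        by_cases hi : i = i0
        · rw [if_pos hi, hi, hpi0]
          have h9 : q i0 - 1 - q i0 = -1 := by ring
          rw [h9]; norm_num
        · rw [if_neg hi, hpother i hi]; simp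
      have hdist : dist1 p q = 1 := by
        unfold dist1
        rw [Finset.sum_congr rfl (fun i _ => habs i)]
        simp
      have hsum1p : sum1 p = t := by
        have hdiff := sum1_diff (p := p) (r := q) i0 (fun i hi => hpother i hi)
        rw [hpi0] at hdiff
        omega
      have hq1 : 1 ≤ q i0 := (hqD i0).1
      have hpV : p ∈ L d n t ∪ Km d n t := by
        by_cases hc : 2 ≤ q i0
        · left
          refine ⟨fun i => ?_, hsum1p⟩
          by_cases hi : i = i0
          · subst hi; rw [hpi0]
            have := (hqD i0).2
            omega
          · rw [hpother i hi]; exact hqD i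
        · right
          have hq1' : q i0 = 1 := by omega
          have hpnD : p ∉ Dset d n := by
            intro hD
            have := (hD i0).1
            rw [hpi0, hq1'] at this
            omega
          exact ⟨⟨⟨hpnD, q, hqD, hdist⟩, hsum1p⟩, i0, by rw [hpi0, hq1']; ring⟩
      have hpVset : p ∈ Vset d n := by
        rcases hpV with h | h
        · exact Or.inl h.1
        · exact Or.inr h.1.1
      have hAdj : Adj d n p q := ⟨hdist, hpVset, Or.inl hqD, Or.inr hqD⟩
      have hqnbr : q ∈ (nbr d n p).filter (fun r => r ∈ L d n (t+1)) := by
        refine Finset.mem_filter.mpr ⟨Finset.mem_filter.mpr ⟨?_, hAdj⟩, hqD, hqs⟩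
        refine Fintype.mem_piFinset.mpr (fun i => ?_)
        have := hqD i
        exact Finset.mem_Icc.mpr ⟨by omega, by omega⟩
      have hlinp := hlin p hpV
      have heq : ∑ r ∈ (nbr d n p).filter (fun r => r ∈ L d n (t+1)), γ p r * c r
          = γ p q * c q := by
        apply Finset.sum_eq_single_of_mem q hqnbr
        intro r hr hrq
        obtain ⟨hrnbr, hrD, hrs⟩ := Finset.mem_filter.mp hr
        obtain ⟨hrbox, hrAdj⟩ := Finset.mem_filter.mp hrnbr
        have hdistpr : dist1 p r = 1 := hrAdj.1
        have hsr : sum1 r = sum1 p + 1 := by omega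
        obtain ⟨j, hj1, hj2⟩ := step_up hdistpr hsr
        have hj0 : j ≠ i0 := by
          intro hji
          apply hrq
          funext i
          by_cases hi : i = i0
          · subst hi; rw [← hji, hj1, hji, hpi0]; ring
          · rw [hj2 i (by rw [hji]; exact hi), hpother i hi]
        have hr0 : r i0 = q i0 - 1 := by
          rw [hj2 i0 (fun h => hj0 h.symm), hpi0]
        have hr1 : 1 ≤ r i0 := (hrD i0).1
        have hlt : (r i0).toNat < m := by omega
        rw [IH (r i0).toNat hlt r ⟨hrD, hrs⟩ rfl, mul_zero]
      rw [heq] at hlinp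
      have hγpos := hγ.2 p q hAdj
      rcases mul_eq_zero.mp hlinp with h | h
      · exact absurd h (ne_of_gt hγpos)
      · exact h
  have key' : ∀ q ∈ L d n (t+1), c q = 0 := fun q hq => key _ q hq rfl
  refine ⟨?_, ?_, key'⟩
  · -- Part 1: harmonicity on L_t
    intro p hp
    obtain ⟨hpD, hps⟩ := hp
    have hcp : c p = 0 := hsupp p (fun h => by have := h.2; omega)
    unfold lap
    calc ∑ q ∈ nbr d n p, γ q p * (c q - c p)
        = ∑ q ∈ (nbr d n p).filter (fun q => q ∈ L d n (t+1)), γ q p * (c q - c p) := by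
          refine (Finset.sum_filter_of_ne ?_).symm
          intro q _ hne
          by_contra hq
          rw [hsupp q hq, hcp] at hne
          simp at hne
      _ = ∑ q ∈ (nbr d n p).filter (fun q => q ∈ L d n (t+1)), γ p q * c q := by
          refine Finset.sum_congr rfl (fun q _ => ?_)
          rw [hcp, sub_zero, hγ.1 q p]
      _ = 0 := hlin p (Or.inl ⟨hpD, hps⟩)
  · -- Part 2: vanishing Cauchy data on J_t^S
    intro p hp
    have hpB : p ∈ Bset d n := by
      rcases hp with h | h
      · exact h.1
      · exact h.1
    have hcp : c p = 0 := hsupp p (fun h => hpB.1 h.1)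
    refine ⟨hcp, ?_⟩
    unfold cur
    have hfilter : ∑ q ∈ nbrD d n p, γ p q * (c q - c p)
        = ∑ q ∈ (nbrD d n p).filter (fun q => q ∈ L d n (t+1)), γ p q * (c q - c p) := by
      refine (Finset.sum_filter_of_ne ?_).symm
      intro q _ hne
      by_contra hq
      rw [hsupp q hq, hcp] at hne
      simp at hne
    rw [hfilter]
    rcases hp with ⟨hB, hle, i, hi⟩ | ⟨hB, hle, i, hi⟩
    · -- p ∈ K_t^{S-}
      by_cases hst : sum1 p = t
      · have hKm : p ∈ Km d n t := ⟨⟨hB, hst⟩, i, hi⟩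
        have hset : (nbrD d n p).filter (fun q => q ∈ L d n (t+1))
            = (nbr d n p).filter (fun q => q ∈ L d n (t+1)) := by
          unfold nbrD
          rw [Finset.filter_filter]
          exact Finset.filter_congr (fun q _ => by
            constructor
            · exact fun h => h.2
            · exact fun h => ⟨h.1, h⟩)
        calc ∑ q ∈ (nbrD d n p).filter (fun q => q ∈ L d n (t+1)), γ p q * (c q - c p)
            = ∑ q ∈ (nbr d n p).filter (fun q => q ∈ L d n (t+1)), γ p q * c q := by
              rw [hset]
              exact Finset.sum_congr rfl (fun q _ => by rw [hcp, sub_zero])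
          _ = 0 := hlin p (Or.inr hKm)
      · -- sum1 p < t : no neighbour lies in L_{t+1}
        refine Finset.sum_eq_zero (fun q hq => ?_)
        exfalso
        obtain ⟨hqnD, hqD', hqs⟩ := Finset.mem_filter.mp hq
        obtain ⟨hqn, _⟩ := Finset.mem_filter.mp hqnD
        obtain ⟨_, hqAdj⟩ := Finset.mem_filter.mp hqn
        have := sum1_adj hqAdj.1
        omega
    · -- p ∈ K_{t+1}^{S+}
      refine Finset.sum_eq_zero (fun q hq => ?_)
      exfalso
      obtain ⟨hqnD, hqD', hqs⟩ := Finset.mem_filter.mp hq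
      obtain ⟨hqn, _⟩ := Finset.mem_filter.mp hqnD
      obtain ⟨_, hqAdj⟩ := Finset.mem_filter.mp hqn
      have hcs := sum1_adj hqAdj.1
      have hst : sum1 p = t := by omega
      have hsq : sum1 q = sum1 p + 1 := by omega
      obtain ⟨j, hj1, hj2⟩ := step_up hqAdj.1 hsq
      have hqi : q i ≤ (n : ℤ) := (hqD' i).2
      by_cases hij : i = j
      · rw [← hij] at hj1; omega
      · rw [hj2 i hij, hi] at hqi; omega

end DiscreteCalderon
end
end
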